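/- Let q be an odd prime power with q > 5 and let a ∈ F_q with a ≠ 0, a ≠ 1, such that 1−a and a(a−1) are both squares in F_q. Let C1 be the conic of PG(2,q) with equation Z² = XY and C2 the conic with equation Z² = aXY. Then the set of points lying on exactly one of C1 and C2 (their symmetric difference) is a set without tangents in PG(2,q) of size 2(q−1). -/

import Mathlib

/-!
`PG(2,F)`: points are the 1-dimensional subspaces of `F^3` (modelled as the
projectivization of `Fin 3 → F`), lines are the 2-dimensional subspaces.
-/

variable {F : Type*} [Field F]

/-- The points of `PG(2,F)`: 1-dimensional subspaces of `F^3`. -/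
abbrev PGPoint (F : Type*) [Field F] := Projectivization F (Fin 3 → F)

/-- A line of `PG(2,F)` is a 2-dimensional subspace of `F^3`. -/
def IsProjLine (F : Type*) [Field F] (L : Submodule F (Fin 3 → F)) : Prop :=
  Module.finrank F L = 2

/-- The set of projective points lying on the subspace `L`. -/
def pointsOn (L : Submodule F (Fin 3 → F)) : Set (PGPoint F) :=
  {P | P.submodule ≤ L}

/-- `S` is a set without tangents: no line of `PG(2,F)` meets `S` in exactly one point. -/
def NoTangents (S : Set (PGPoint F)) : Prop :=
  ∀ L : Submodule F (Fin 3 → F), IsProjLine F L →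
    ¬ (∃! P : PGPoint F, P ∈ S ∩ pointsOn L)

/-- The conic of `PG(2,F)` with equation `Z² = XY`. -/
def conicZsqXY (F : Type*) [Field F] : Set (PGPoint F) :=
  {P | ∀ v ∈ P.submodule, (v 2) ^ 2 = v 0 * v 1}

/-- The conic of `PG(2,F)` with equation `Z² = aXY`. -/
def conicZsqaXY (F : Type*) [Field F] (a : F) : Set (PGPoint F) :=
  {P | ∀ v ∈ P.submodule, (v 2) ^ 2 = a * (v 0 * v 1)}

open Projectivization Module


lemma mem_conicA_iff (b : F) (v : Fin 3 → F) (hv : v ≠ 0) :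
    Projectivization.mk F v hv ∈ conicZsqaXY F b ↔ (v 2)^2 = b * (v 0 * v 1) := by
  constructor
  · intro h
    exact h v (by rw [submodule_mk]; exact Submodule.mem_span_singleton_self v)
  · intro h w hw
    rw [submodule_mk, Submodule.mem_span_singleton] at hw
    obtain ⟨k, rfl⟩ := hw
    simp only [Pi.smul_apply, smul_eq_mul]
    linear_combination k^2 * h

lemma conicXY_eq : conicZsqXY F = conicZsqaXY F 1 := by
  ext P
  simp [conicZsqXY, conicZsqaXY]

lemma mem_pointsOn_mk (L : Submodule F (Fin 3 → F)) (v : Fin 3 → F) (hv : v ≠ 0) :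
    Projectivization.mk F v hv ∈ pointsOn L ↔ v ∈ L := by
  simp [pointsOn, submodule_mk, Submodule.span_singleton_le_iff_mem]

lemma vec_ne (y z : F) : ![1, y, z] ≠ (0 : Fin 3 → F) := by
  intro h
  have := congrFun h 0
  simp at this

lemma mk_norm_eq_iff (y z y' z' : F) (h : ![1, y, z] ≠ (0 : Fin 3 → F))
    (h' : ![1, y', z'] ≠ (0 : Fin 3 → F)) :
    Projectivization.mk F ![1, y, z] h = Projectivization.mk F ![1, y', z'] h'
      ↔ y = y' ∧ z = z' := by
  rw [mk_eq_mk_iff']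
  constructor
  · rintro ⟨k, hk⟩
    have h0 := congrFun hk 0
    have h1 := congrFun hk 1
    have h2 := congrFun hk 2
    simp [Matrix.cons_val_zero, Matrix.cons_val_one] at h0 h1 h2
    subst h0
    simp_all
  · rintro ⟨rfl, rfl⟩
    exact ⟨1, by simp⟩

lemma mem_conic_norm (b y z : F) (h : ![1, y, z] ≠ (0 : Fin 3 → F)) :
    Projectivization.mk F ![1, y, z] h ∈ conicZsqaXY F b ↔ z^2 = b * y := by
  rw [mem_conicA_iff]
  simp

lemma exists_param (b : F) (hb : b ≠ 0) (b' : F) (P : PGPoint F)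
    (hP : P ∈ conicZsqaXY F b) (hP' : P ∉ conicZsqaXY F b') :
    ∃ t : F, t ≠ 0 ∧ P = Projectivization.mk F ![1, t^2/b, t] (vec_ne _ _) := by
  induction P using Projectivization.ind with
  | h v hv =>
  rw [mem_conicA_iff] at hP
  by_cases h0 : v 0 = 0
  · exfalso
    apply hP'
    have hz : v 2 = 0 := by
      have : (v 2)^2 = 0 := by rw [hP, h0]; ring
      exact pow_eq_zero_iff (n := 2) (by norm_num) |>.1 this
    rw [mem_conicA_iff, h0, hz]
    ring
  · refine ⟨v 2 / v 0, ?_, ?_⟩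
    · intro ht
      apply hP'
      have hz : v 2 = 0 := by
        field_simp at ht
        simpa using ht
      have h1 : v 1 = 0 := by
        rw [hz] at hP
        have : b * (v 0 * v 1) = 0 := by linear_combination -hP
        rcases mul_eq_zero.1 this with h | h
        · exact absurd h hb
        · rcases mul_eq_zero.1 h with h | h
          · exact absurd h h0
          · exact h
      rw [mem_conicA_iff, hz, h1]
      ring
    · rw [Projectivization.mk_eq_mk_iff']
      refine ⟨v 0, ?_⟩
      funext i
      fin_cases i <;>
        simp only [Pi.smul_apply, smul_eq_mul, Matrix.cons_val_zero, Matrix.cons_val_one,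
          Matrix.head_cons, Matrix.cons_val_two, Matrix.tail_cons, Fin.reduceFinMk, Matrix.cons_val]
      · simp
      · field_simp
        linear_combination hP
      · field_simp

lemma half (b b' : F) (hb : b ≠ 0) (hb' : b' ≠ 0) (hne : b' ≠ b)
    (hs : IsSquare (b' * (b' - b)))
    (L : Submodule F (Fin 3 → F)) (c : Fin 3 → F) (hc : c ≠ 0)
    (hLc : ∀ v, v ∈ L ↔ c 0 * v 0 + c 1 * v 1 + c 2 * v 2 = 0)
    (P : PGPoint F) (hPb : P ∈ conicZsqaXY F b) (hPb' : P ∉ conicZsqaXY F b')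
    (hPL : P ∈ pointsOn L)
    (huniq : ∀ Q : PGPoint F,
      (Q ∈ conicZsqaXY F b \ conicZsqaXY F b' ∨ Q ∈ conicZsqaXY F b' \ conicZsqaXY F b) →
      Q ∈ pointsOn L → Q = P) : False := by
  obtain ⟨t, ht, rfl⟩ := exists_param b hb b' P hPb hPb'
  rw [mem_pointsOn_mk, hLc] at hPL
  simp only [Matrix.cons_val_zero, Matrix.cons_val_one, Matrix.head_cons,
    Matrix.cons_val_two, Matrix.tail_cons, mul_one] at hPL
  have hPL' : c 0 + c 1 * (t ^ 2 / b) + c 2 * t = 0 := hPL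
  clear hPL
  by_cases hc1 : c 1 = 0
  · -- line passes through (0,1,0); second conic gives another point (1, t²/b', t)
    have hc2 : c 2 ≠ 0 := by
      intro hc2
      have hc0 : c 0 = 0 := by
        rw [hc1, hc2] at hPL'
        linear_combination hPL'
      apply hc
      funext i
      fin_cases i <;> simpa
    have hc0 : c 0 = -(c 2 * t) := by
      rw [hc1] at hPL'
      linear_combination hPL'
    have hR := huniq (Projectivization.mk F ![1, t^2/b', t] (vec_ne _ _))
      (Or.inr ⟨(mem_conic_norm _ _ _ _).2 (by field_simp), ?_⟩) ?_
    · rw [mk_norm_eq_iff] at hR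
      obtain ⟨h1, -⟩ := hR
      field_simp at h1
      exact hne h1.symm
    · intro hmem
      rw [mem_conic_norm] at hmem
      -- t^2 = b * (t^2/b')
      field_simp at hmem
      exact hne hmem
    · rw [mem_pointsOn_mk, hLc]
      simp only [Matrix.cons_val_zero, Matrix.cons_val_one, Matrix.head_cons,
        Matrix.cons_val_two, Matrix.tail_cons, mul_one]
      rw [hc0, hc1]
      ring
  · -- c 1 ≠ 0
    by_cases hQ : ∃ s : F, s ≠ t ∧ c 0 + c 1 * (s ^ 2 / b) + c 2 * s = 0
    · -- a second point of the first conic on the line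
      obtain ⟨s, hst, hroot⟩ := hQ
      have hQL : Projectivization.mk F ![1, s^2/b, s] (vec_ne _ _) ∈ pointsOn L := by
        rw [mem_pointsOn_mk, hLc]
        simp only [Matrix.cons_val_zero, Matrix.cons_val_one, Matrix.head_cons,
          Matrix.cons_val_two, Matrix.tail_cons, mul_one]
        exact hroot
      have hQb : Projectivization.mk F ![1, s^2/b, s] (vec_ne _ _) ∈ conicZsqaXY F b :=
        (mem_conic_norm _ _ _ _).2 (by field_simp)
      have hQb' : Projectivization.mk F ![1, s^2/b, s] (vec_ne _ _) ∈ conicZsqaXY F b' := by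
        by_contra hnot
        have := huniq _ (Or.inl ⟨hQb, hnot⟩) hQL
        rw [mk_norm_eq_iff] at this
        exact hst this.2
      rw [mem_conic_norm] at hQb'
      -- s^2 = b' * (s^2/b), b' ≠ b  ⇒  s = 0
      have hs0 : s = 0 := by
        by_contra hsne
        apply hne
        field_simp at hQb'
        exact hQb'.symm
      subst hs0
      have hc0 : c 0 = 0 := by linear_combination hroot
      -- line : c1 y + c2 z = 0 through P gives c2 = -c1 t / b
      have hc2 : c 2 * b = -(c 1 * t) := by
        rw [hc0] at hPL'
        have h2 : c 1 * t^2 + c 2 * t * b = 0 := by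
          field_simp at hPL'
          linear_combination hPL'
        have h3 : t * (c 2 * b + c 1 * t) = 0 := by linear_combination h2
        rcases mul_eq_zero.1 h3 with h | h
        · exact absurd h ht
        · linear_combination h
      -- new point (1, t²b'/b², t b'/b) on the other conic and on the line
      have hR := huniq (Projectivization.mk F ![1, t^2*b'/b^2, t*b'/b] (vec_ne _ _))
        (Or.inr ⟨(mem_conic_norm _ _ _ _).2 (by field_simp), ?_⟩) ?_
      · rw [mk_norm_eq_iff] at hR
        obtain ⟨-, h2⟩ := hR
        -- t * b' / b = t ⇒ b' = b
        field_simp at h2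
        exact hne h2
      · intro hmem
        rw [mem_conic_norm] at hmem
        -- (t b'/b)^2 = b * (t² b'/b²)
        apply hne
        field_simp at hmem
        exact hmem
      · rw [mem_pointsOn_mk, hLc]
        simp only [Matrix.cons_val_zero, Matrix.cons_val_one, Matrix.head_cons,
          Matrix.cons_val_two, Matrix.tail_cons, mul_one]
        rw [hc0]
        field_simp
        linear_combination (t * b') * hc2
    · -- the line is the tangent at P
      push_neg at hQ
      have hroot_t : ∀ s : F, c 0 + c 1 * (s ^ 2 / b) + c 2 * s = 0 → s = t := by
        intro s hsr
        by_contra hsne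
        exact hQ s hsne hsr
      -- t' = -(c2 b)/c1 - t is also a root
      have htt : -(c 2 * b) / c 1 - t = t := by
        apply hroot_t
        have hPL2 : c 0 * b + c 1 * t ^ 2 + c 2 * t * b = 0 := by
          field_simp at hPL'
          linear_combination hPL'
        field_simp
        linear_combination (c 1) * hPL2
      have hc2 : c 2 * b = -(2 * c 1 * t) := by
        field_simp at htt
        linear_combination -htt
      have hc0 : c 0 * b = c 1 * t^2 := by
        have h2 : c 0 * b + c 1 * t^2 + c 2 * t * b = 0 := by
          field_simp at hPL'
          linear_combination hPL'
        linear_combination h2 - t * hc2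
      obtain ⟨r, hr⟩ := hs
      have hrne : r ≠ 0 := by
        intro h
        rw [h, mul_zero] at hr
        rcases mul_eq_zero.1 hr with h1 | h1
        · exact hb' h1
        · exact hne (by linear_combination h1)
      set z1 := t * (b' + r) / b with hz1
      set y1 := (2 * t * z1 - t ^ 2) / b with hy1
      have hz1t : z1 ≠ t := by
        intro h
        rw [hz1] at h
        field_simp at h
        have h4 : r = b - b' := by linear_combination h
        rw [h4] at hr
        have h5 : (b' - b) * b = 0 := by linear_combination hr
        rcases mul_eq_zero.1 h5 with h6 | h6
        · exact hne (by linear_combination h6)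
        · exact hb h6
      have hline : c 0 + c 1 * y1 + c 2 * z1 = 0 := by
        rw [hy1]
        field_simp
        linear_combination hc0 + z1 * hc2
      have hRL : Projectivization.mk F ![1, y1, z1] (vec_ne _ _) ∈ pointsOn L := by
        rw [mem_pointsOn_mk, hLc]
        simp only [Matrix.cons_val_zero, Matrix.cons_val_one, Matrix.head_cons,
          Matrix.cons_val_two, Matrix.tail_cons, mul_one]
        linear_combination hline
      have hRb' : Projectivization.mk F ![1, y1, z1] (vec_ne _ _) ∈ conicZsqaXY F b' := by
        rw [mem_conic_norm, hy1, hz1]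
        field_simp
        linear_combination (-1 : F) * hr
      have hRb : Projectivization.mk F ![1, y1, z1] (vec_ne _ _) ∉ conicZsqaXY F b := by
        intro hmem
        rw [mem_conic_norm] at hmem
        -- z1^2 = b * y1 ⇒ z1 is a root ⇒ z1 = t, contradiction
        apply hz1t
        apply hroot_t
        field_simp
        linear_combination b * hline + c 1 * hmem
      have hR := huniq _ (Or.inr ⟨hRb', hRb⟩) hRL
      rw [mk_norm_eq_iff] at hR
      exact hz1t hR.2

lemma diff_eq (b b' : F) (hb : b ≠ 0) (hne : b' ≠ b) :
    conicZsqaXY F b \ conicZsqaXY F b' =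
      (fun t : F => Projectivization.mk F ![1, t^2/b, t] (vec_ne _ _)) '' {t | t ≠ 0} := by
  ext P
  constructor
  · rintro ⟨h1, h2⟩
    obtain ⟨t, ht, rfl⟩ := exists_param b hb b' P h1 h2
    exact ⟨t, ht, rfl⟩
  · rintro ⟨t, ht, rfl⟩
    constructor
    · exact (mem_conic_norm _ _ _ _).2 (by field_simp)
    · intro h
      rw [mem_conic_norm] at h
      field_simp at h
      exact hne (mul_left_cancel₀ (pow_ne_zero 2 ht)
        (by linear_combination -h : t^2 * b' = t^2 * b))

lemma line_functional (L : Submodule F (Fin 3 → F)) (hL : Module.finrank F L = 2) :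
    ∃ c : Fin 3 → F, c ≠ 0 ∧ ∀ v, v ∈ L ↔ c 0 * v 0 + c 1 * v 1 + c 2 * v 2 = 0 := by
  have hdim : finrank F (Fin 3 → F) = 3 := by simp
  have hquot : finrank F ((Fin 3 → F) ⧸ L) = 1 := by
    have := Submodule.finrank_quotient_add_finrank L
    omega
  let B : Basis (Fin 1) F ((Fin 3 → F) ⧸ L) := Module.finBasisOfFinrankEq F _ hquot
  let φ : (Fin 3 → F) →ₗ[F] F :=
    (LinearMap.proj 0) ∘ₗ (B.equivFun : ((Fin 3 → F) ⧸ L) ≃ₗ[F] (Fin 1 → F)).toLinearMap ∘ₗ L.mkQ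
  have hker : ∀ v, v ∈ L ↔ φ v = 0 := by
    intro v
    simp only [φ, LinearMap.comp_apply]
    rw [← Submodule.Quotient.mk_eq_zero L]
    constructor
    · intro h
      rw [show L.mkQ v = Submodule.Quotient.mk v from rfl, h]
      simp
    · intro h
      have h1 : B.equivFun (Submodule.Quotient.mk v) = 0 := by
        funext i
        fin_cases i
        exact h
      exact B.equivFun.injective (by rw [h1, map_zero])
  have hphi : ∀ v : Fin 3 → F, φ v = φ (Pi.single 0 1) * v 0 + φ (Pi.single 1 1) * v 1
      + φ (Pi.single 2 1) * v 2 := by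
    intro v
    have hv : v = v 0 • (Pi.single 0 1 : Fin 3 → F) + v 1 • (Pi.single 1 1 : Fin 3 → F)
        + v 2 • (Pi.single 2 1 : Fin 3 → F) := by
      funext i
      fin_cases i <;> simp [Pi.single_apply]
    conv_lhs => rw [hv]
    simp only [map_add, map_smul, smul_eq_mul]
    ring
  refine ⟨![φ (Pi.single 0 1), φ (Pi.single 1 1), φ (Pi.single 2 1)], ?_, ?_⟩
  · intro hc
    have hall : ∀ v : Fin 3 → F, v ∈ L := by
      intro v
      rw [hker, hphi]
      have h0 := congrFun hc 0
      have h1 := congrFun hc 1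
      have h2 := congrFun hc 2
      simp only [Matrix.cons_val_zero, Matrix.cons_val_one, Matrix.head_cons,
        Matrix.cons_val_two, Matrix.tail_cons, Pi.zero_apply] at h0 h1 h2
      rw [h0, h1, h2]; ring
    have htop : L = ⊤ := Submodule.eq_top_iff'.2 hall
    rw [htop, finrank_top] at hL
    omega
  · intro v
    rw [hker, hphi]
    simp only [Matrix.cons_val_zero, Matrix.cons_val_one, Matrix.head_cons,
      Matrix.cons_val_two, Matrix.tail_cons]

lemma ncard_ne_zero [Fintype F] (q : ℕ) (hq : Fintype.card F = q) :
    ({t : F | t ≠ 0}).ncard = q - 1 := by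
  classical
  have h1 : {t : F | t ≠ 0} = ({0} : Set F)ᶜ := by ext x; simp
  have h2 := Set.ncard_add_ncard_compl ({0} : Set F) (Set.toFinite _) (Set.toFinite _)
  rw [Set.ncard_singleton, Nat.card_eq_fintype_card, hq] at h2
  rw [h1]
  omega

lemma diff_ncard [Fintype F] (q : ℕ) (hq : Fintype.card F = q) (b b' : F) (hb : b ≠ 0)
    (hne : b' ≠ b) : (conicZsqaXY F b \ conicZsqaXY F b').ncard = q - 1 := by
  rw [diff_eq b b' hb hne, Set.ncard_image_of_injOn, ncard_ne_zero q hq]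
  intro x hx y hy hxy
  rw [mk_norm_eq_iff] at hxy
  exact hxy.2

/-- for odd `q > 5` and `a ∉ {0,1}` with `1-a` and `a(a-1)` both
squares, the symmetric difference of the conics `Z² = XY` and `Z² = aXY` is a
set without tangents of size `2(q-1)`. -/
theorem stmt_15 [Fintype F] (q : ℕ) (hq : Fintype.card F = q) (hodd : Odd q)
    (h5 : 5 < q) (a : F) (ha0 : a ≠ 0) (ha1 : a ≠ 1)
    (hsq1 : IsSquare (1 - a)) (hsq2 : IsSquare (a * (a - 1))) :
    NoTangents ((conicZsqXY F \ conicZsqaXY F a) ∪ (conicZsqaXY F a \ conicZsqXY F)) ∧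
      ((conicZsqXY F \ conicZsqaXY F a) ∪ (conicZsqaXY F a \ conicZsqXY F)).ncard
        = 2 * (q - 1) := by
  rw [conicXY_eq]
  constructor
  · intro L hL hEx
    obtain ⟨c, hc, hLc⟩ := line_functional L hL
    obtain ⟨P, ⟨hPS, hPL⟩, huni⟩ := hEx
    rcases hPS with ⟨hPb, hPb'⟩ | ⟨hPb, hPb'⟩
    · exact half 1 a one_ne_zero ha0 ha1 hsq2 L c hc hLc P hPb hPb' hPL
        (fun Q hQ hQL => huni Q ⟨hQ, hQL⟩)
    · exact half a 1 ha0 one_ne_zero (fun h => ha1 h.symm)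
        (by rw [one_mul]; exact hsq1) L c hc hLc P hPb hPb' hPL
        (fun Q hQ hQL => huni Q ⟨hQ.symm, hQL⟩)
  · have hdisj : Disjoint (conicZsqaXY F 1 \ conicZsqaXY F a)
        (conicZsqaXY F a \ conicZsqaXY F 1) := by
      rw [Set.disjoint_left]
      rintro x ⟨h1, h2⟩ ⟨h3, h4⟩
      exact h2 h3
    rw [Set.ncard_union_eq hdisj
      (by rw [diff_eq 1 a one_ne_zero ha1]; exact (Set.toFinite _).image _)
      (by rw [diff_eq a 1 ha0 (fun h => ha1 h.symm)]; exact (Set.toFinite _).image _)]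
    rw [diff_ncard q hq 1 a one_ne_zero ha1, diff_ncard q hq a 1 ha0 (fun h => ha1 h.symm)]
    omega
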